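/- Let p, l be positive integers and let w be a word. Suppose w is partitioned into p words (phrases) such that for every k ≥ 1 at most l of the phrases have length exactly k. Then p ≤ sqrt(2 * l * |w|). -/

import Mathlib

open Finset

lemma aux_indsum {β : Type*} (P : β → Prop) [DecidablePred P] (x : List β) :
    (x.map (fun a => if P a then 1 else 0)).sum = (x.filter (fun a => P a)).length := by
  induction x with
  | nil => simp
  | cons a t ih =>
    by_cases h : P a <;> simp [h, List.filter_cons, ih, Nat.add_comm]

/-- If a word `w` is partitioned into `p` (nonempty) phrases such that
for every `k ≥ 1` at most `l` of the phrases have length exactly `k`, then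
`p ≤ sqrt (2 * l * |w|)`. -/
theorem stmt_1 {α : Type*} (p l : ℕ) (hp : 1 ≤ p) (hl : 1 ≤ l)
    (w : List α) (x : List (List α))
    (hlen : x.length = p) (hjoin : w = x.flatten)
    (hne : ∀ xi ∈ x, xi ≠ [])
    (hcount : ∀ k : ℕ, 1 ≤ k → (x.filter (fun xi => xi.length = k)).length ≤ l) :
    (p : ℝ) ≤ Real.sqrt (2 * l * w.length) := by
  set n := x.length with hn
  set f : Fin n → ℕ := fun i => (x.get i).length with hf
  have h1 : ∀ i, 1 ≤ f i := by
    intro i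
    have := hne (x.get i) (x.get_mem i)
    simpa [hf, Nat.one_le_iff_ne_zero] using this
  -- sum of lengths
  have hofn : List.ofFn f = x.map List.length := by
    rw [hf]
    calc List.ofFn (fun i => (x.get i).length) = List.map List.length (List.ofFn x.get) := by
          rw [List.map_ofFn]; rfl
      _ = x.map List.length := by rw [List.ofFn_get]
  have h3 : ∑ i, f i = w.length := by
    rw [hjoin, List.length_flatten, ← hofn, List.sum_ofFn]
  -- count bound
  have h2 : ∀ k, 1 ≤ k → (univ.filter fun i => f i = k).card ≤ l := by
    intro k hk
    have indsum := fun (P : List α → Prop) (inst : DecidablePred P) => aux_indsum P x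
    calc (univ.filter fun i => f i = k).card = ∑ i, if f i = k then 1 else 0 :=
          Finset.card_filter _ _
      _ = (List.ofFn fun i => if (x.get i).length = k then 1 else 0).sum := by
          rw [List.sum_ofFn]
      _ = ((x.map (fun a => if a.length = k then 1 else 0))).sum := by
          rw [show (List.ofFn fun i => if (x.get i).length = k then 1 else 0)
              = List.map (fun a => if a.length = k then 1 else 0) (List.ofFn x.get) by
              rw [List.map_ofFn]; rfl, List.ofFn_get]
      _ = (x.filter (fun a => a.length = k)).length := indsum _ _
      _ ≤ l := hcount k hk
  -- key pointwise bound
  have key1 : ∀ i, (univ.filter fun j => f j ≤ f i).card ≤ l * f i := by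
    intro i
    have hsub : (univ.filter fun j => f j ≤ f i) ⊆
        (Finset.Icc 1 (f i)).biUnion (fun k => univ.filter fun j => f j = k) := by
      intro j hj
      simp only [mem_filter, mem_univ, true_and] at hj
      simp only [mem_biUnion, mem_Icc, mem_filter, mem_univ, true_and]
      exact ⟨f j, ⟨h1 j, hj⟩, rfl⟩
    calc (univ.filter fun j => f j ≤ f i).card
        ≤ ((Finset.Icc 1 (f i)).biUnion (fun k => univ.filter fun j => f j = k)).card :=
          Finset.card_le_card hsub
      _ ≤ ∑ k ∈ Finset.Icc 1 (f i), (univ.filter fun j => f j = k).card :=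
          Finset.card_biUnion_le
      _ ≤ ∑ k ∈ Finset.Icc 1 (f i), l := by
          apply Finset.sum_le_sum
          intro k hk
          exact h2 k (Finset.mem_Icc.mp hk).1
      _ = (f i) * l := by rw [Finset.sum_const, Nat.card_Icc]; simp [Nat.mul_comm]
      _ = l * f i := Nat.mul_comm _ _
  -- double counting
  have key2 : n * n ≤ 2 * ∑ i, (univ.filter fun j => f j ≤ f i).card := by
    have hS : ∀ i : Fin n, (univ.filter fun j => f j ≤ f i).card
        = ∑ j, if f j ≤ f i then 1 else 0 := fun i => Finset.card_filter _ _
    calc n * n = ∑ _i : Fin n, ∑ _j : Fin n, 1 := by simp [Finset.card_univ, mul_comm]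
      _ ≤ ∑ i : Fin n, ∑ j : Fin n,
            ((if f j ≤ f i then 1 else 0) + (if f i ≤ f j then 1 else 0)) := by
          apply Finset.sum_le_sum; intro i _
          apply Finset.sum_le_sum; intro j _
          rcases le_total (f j) (f i) with h | h
          · simp [h]
          · simp [h]
      _ = (∑ i : Fin n, ∑ j : Fin n, if f j ≤ f i then 1 else 0)
          + ∑ i : Fin n, ∑ j : Fin n, if f i ≤ f j then 1 else 0 := by
          rw [← Finset.sum_add_distrib]
          congr 1; ext i; rw [← Finset.sum_add_distrib]
      _ = 2 * ∑ i, (univ.filter fun j => f j ≤ f i).card := by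
          rw [Finset.sum_comm (f := fun i j => if f i ≤ f j then 1 else 0)]
          simp only [hS, two_mul]
  have hnat : p * p ≤ 2 * l * w.length := by
    have : n * n ≤ 2 * (l * w.length) := by
      calc n * n ≤ 2 * ∑ i, (univ.filter fun j => f j ≤ f i).card := key2
        _ ≤ 2 * ∑ i, l * f i := by
            apply Nat.mul_le_mul_left
            exact Finset.sum_le_sum fun i _ => key1 i
        _ = 2 * (l * w.length) := by rw [← Finset.mul_sum, h3]
    rw [← hlen]
    linarith [this]
  have hp' : (0:ℝ) < p := by exact_mod_cast hp
  rw [Real.le_sqrt' hp']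
  have : ((p * p : ℕ) : ℝ) ≤ ((2 * l * w.length : ℕ) : ℝ) := by exact_mod_cast hnat
  push_cast at this
  nlinarith [this]
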